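/- Let A be a Noetherian commutative ring, M a nonzero Noetherian A-module with an associated prime 𝒫 of coheight 0 (i.e., 𝒫 maximal). Then M has a submodule K isomorphic to A/𝒫 of length 1, and for any such K, every proper quotient of M either has the form M/K or factors appropriately; in particular ℓ(M) = ℓ(M/K) + 1 where ℓ denotes the ordinal-valued length defined by ℓ(M) = sup{ℓ(N)+1 : N a proper quotient of M}. -/

import Mathlib

open scoped Classical

universe u

/-- The ordinal-valued length of a module, characterized by
`olength M = sup { olength N + 1 : N proper quotient of M }`: it is the rank of `⊥` in
the well-founded relation `>` on submodules (a submodule `K` corresponds to the quotient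
`M/K`); defined to be `0` when the relation is not accessible at `⊥`. -/
noncomputable def olength (A : Type u) [CommRing A] (M : Type u) [AddCommGroup M]
    [Module A M] : Ordinal :=
  if h : Acc (α := Submodule A M) (· > ·) ⊥ then h.rank else 0

/-- Ranks transfer along a map that induces surjections on predecessors. -/
theorem rank_eq_rank_of_map {α β : Type u} {r : α → α → Prop} {s : β → β → Prop}
    [IsWellFounded α r] [IsWellFounded β s] (f : α → β)
    (h1 : ∀ a b, r b a → s (f b) (f a))
    (h2 : ∀ a c, s c (f a) → ∃ b, r b a ∧ f b = c) (a : α) :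
    IsWellFounded.rank s (f a) = IsWellFounded.rank r a := by
  refine IsWellFounded.induction r
    (motive := fun a => IsWellFounded.rank s (f a) = IsWellFounded.rank r a) a ?_
  intro x IH
  rw [IsWellFounded.rank_eq r x, IsWellFounded.rank_eq s (f x)]
  apply le_antisymm
  · refine Ordinal.iSup_le ?_
    rintro ⟨c, hc⟩
    obtain ⟨b, hb, rfl⟩ := h2 x c hc
    rw [IH b hb]
    exact Ordinal.le_iSup (fun b : {b // r b x} => Order.succ (IsWellFounded.rank r b.1)) ⟨b, hb⟩
  · refine Ordinal.iSup_le ?_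
    rintro ⟨b, hb⟩
    rw [← IH b hb]
    exact Ordinal.le_iSup (fun c : {c // s c (f x)} => Order.succ (IsWellFounded.rank s c.1))
      ⟨f b, h1 x b hb⟩

/-- In a modular lattice with well-founded `>`, if `K` is an atom and `K ⊓ N = ⊥`, then
the (co)rank of `N` is the successor of the rank of `K ⊔ N`. -/
theorem rank_eq_succ_rank_sup_atom {L0 : Type u} [Lattice L0] [OrderBot L0]
    [IsModularLattice L0] [WellFoundedGT L0] {K : L0} (hK : IsAtom K) (N : L0) :
    K ⊓ N = ⊥ → IsWellFounded.rank (α := L0) (· > ·) N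
      = Order.succ (IsWellFounded.rank (α := L0) (· > ·) (K ⊔ N)) := by
  refine IsWellFounded.induction (α := L0) (· > ·)
    (motive := fun N => K ⊓ N = ⊥ → IsWellFounded.rank (α := L0) (· > ·) N
      = Order.succ (IsWellFounded.rank (α := L0) (· > ·) (K ⊔ N))) N ?_
  intro N IH hdisj
  have hNlt : N < K ⊔ N := by
    rcases lt_or_eq_of_le (le_sup_right : N ≤ K ⊔ N) with h | h
    · exact h
    · exfalso
      have hKN : K ≤ N := le_trans le_sup_left h.ge
      exact hK.1 (by rw [← hdisj]; exact (inf_eq_left.mpr hKN).symm)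
  apply le_antisymm
  · rw [IsWellFounded.rank_eq (α := L0) (· > ·) N]
    refine Ordinal.iSup_le ?_
    rintro ⟨L, (hL : L > N)⟩
    refine Order.succ_le_succ ?_
    by_cases hKL : K ≤ L
    · have h1 : K ⊔ N ≤ L := sup_le hKL hL.le
      rcases eq_or_lt_of_le h1 with h | h
      · rw [h]
      · exact (IsWellFounded.rank_lt_of_rel (r := (· > ·)) h).le
    · have hKLbot : K ⊓ L = ⊥ := by
        refine hK.2 _ (lt_of_le_of_ne inf_le_left ?_)
        intro h
        exact hKL (h ▸ inf_le_right)
      have hr := IH L hL hKLbot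
      have hlt : K ⊔ N < K ⊔ L := by
        refine lt_of_le_of_ne (sup_le_sup_left hL.le K) ?_
        intro h
        have hLle : L ≤ N ⊔ K := by rw [sup_comm]; exact h ▸ le_sup_right
        have : N ⊔ K ⊓ L = L := by
          rw [← sup_inf_assoc_of_le K hL.le]
          exact inf_eq_right.mpr hLle
        rw [hKLbot, sup_bot_eq] at this
        exact hL.ne' this.symm
      rw [hr, Order.succ_le_iff]
      exact IsWellFounded.rank_lt_of_rel (r := (· > ·)) hlt
  · rw [Order.succ_le_iff]
    exact IsWellFounded.rank_lt_of_rel (r := (· > ·)) hNlt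

theorem olength_eq_rank (A : Type u) [CommRing A] (M : Type u) [AddCommGroup M]
    [Module A M] [IsNoetherian A M] :
    olength A M = IsWellFounded.rank (α := Submodule A M) (· > ·) ⊥ := by
  rw [olength, dif_pos ((IsWellFounded.wf (r := (· > ·))).apply (⊥ : Submodule A M))]
  rfl

/-- If a nonzero Noetherian module `M` over a Noetherian ring has a maximal associated
prime `𝒫` (coheight zero), then `M` has a submodule `K ≅ A/𝒫`; any such `K` is simple
(length one) and `ℓ(M) = ℓ(M/K) + 1`. -/
theorem olength_eq_succ_of_maximal_associatedPrime
    (A : Type u) [CommRing A] [IsNoetherianRing A]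
    (M : Type u) [AddCommGroup M] [Module A M] [IsNoetherian A M] [Nontrivial M]
    (P : Ideal A) (hmax : P.IsMaximal) (hP : P ∈ associatedPrimes A M) :
    (∃ K : Submodule A M, Nonempty (↥K ≃ₗ[A] A ⧸ P)) ∧
      ∀ K : Submodule A M, Nonempty (↥K ≃ₗ[A] A ⧸ P) →
        IsSimpleModule A ↥K ∧ olength A M = olength A (M ⧸ K) + 1 := by
  constructor
  · obtain ⟨-, x, hx⟩ := isAssociatedPrime_iff.mp hP
    refine ⟨Submodule.span A {x}, ⟨?_⟩⟩
    have htor : P = Ideal.torsionOf A M x := by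
      rw [hx]; ext a
      rw [Submodule.mem_colon_singleton, Ideal.mem_torsionOf_iff, Submodule.mem_bot]
    exact ((Ideal.quotTorsionOfEquivSpanSingleton A M x).symm.trans
      (Submodule.quotEquivOfEq _ _ htor.symm))
  · rintro K ⟨e⟩
    have hsimple : IsSimpleModule A ↥K :=
      isSimpleModule_iff_quot_maximal.mpr ⟨P, hmax, ⟨e⟩⟩
    refine ⟨hsimple, ?_⟩
    have hatom : IsAtom K := isSimpleModule_iff_isAtom.mp hsimple
    -- rank of ⊥ in M is succ (rank K)
    have h1 : IsWellFounded.rank (α := Submodule A M) (· > ·) ⊥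
        = Order.succ (IsWellFounded.rank (α := Submodule A M) (· > ·) K) := by
      have := rank_eq_succ_rank_sup_atom hatom ⊥ (inf_bot_eq K)
      rwa [sup_bot_eq] at this
    -- rank of ⊥ in M⧸K equals rank of K in M
    haveI : IsWellFounded {p' : Submodule A M // K ≤ p'} (· > ·) :=
      ⟨InvImage.wf (fun a : {p' : Submodule A M // K ≤ p'} => a.1)
        (IsWellFounded.wf (r := (· > ·)))⟩
    have hval : IsWellFounded.rank (α := Submodule A M) (· > ·)
          ((⟨K, le_refl K⟩ : {p' : Submodule A M // K ≤ p'}) : Submodule A M)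
        = IsWellFounded.rank (α := {p' : Submodule A M // K ≤ p'}) (· > ·)
          ⟨K, le_refl K⟩ := by
      refine rank_eq_rank_of_map (r := (· > ·)) (s := (· > ·))
        (f := fun a : {p' : Submodule A M // K ≤ p'} => (a : Submodule A M))
        (fun a b h => Subtype.coe_lt_coe.mpr h) ?_ _
      intro a c hc
      exact ⟨⟨c, le_trans a.2 hc.le⟩, Subtype.coe_lt_coe.mp hc, rfl⟩
    have hiso : IsWellFounded.rank (α := {p' : Submodule A M // K ≤ p'}) (· > ·)
          ((Submodule.comapMkQRelIso K) (⊥ : Submodule A (M ⧸ K)))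
        = IsWellFounded.rank (α := Submodule A (M ⧸ K)) (· > ·) ⊥ := by
      refine rank_eq_rank_of_map (r := (· > ·)) (s := (· > ·))
        (f := fun a => (Submodule.comapMkQRelIso K) a)
        (fun a b h => (Submodule.comapMkQRelIso K).lt_iff_lt.mpr h) ?_ _
      intro a c hc
      refine ⟨(Submodule.comapMkQRelIso K).symm c, ?_, by simp⟩
      have h' : (Submodule.comapMkQRelIso K) a
          < (Submodule.comapMkQRelIso K) ((Submodule.comapMkQRelIso K).symm c) := by
        simpa using hc
      exact (Submodule.comapMkQRelIso K).lt_iff_lt.mp h'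
    have hbot : (Submodule.comapMkQRelIso K) (⊥ : Submodule A (M ⧸ K))
        = (⟨K, le_refl K⟩ : {p' : Submodule A M // K ≤ p'}) := by
      apply Subtype.ext
      show Submodule.comap K.mkQ ⊥ = K
      rw [Submodule.comap_bot, Submodule.ker_mkQ]
    have h2 : IsWellFounded.rank (α := Submodule A M) (· > ·) K
        = IsWellFounded.rank (α := Submodule A (M ⧸ K)) (· > ·) ⊥ := by
      rw [← hiso, hbot, ← hval]
    rw [olength_eq_rank, olength_eq_rank, h1, h2, Ordinal.add_one_eq_succ]
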